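/- Let m ≥ 2 and n ≥ 2 be integers and let p ≥ 1 be an integer coprime to m·(n−1). Then in the polynomial ring ℤ[X] one has (X^n − 1) · Σ_{j=0}^{m−1} X^{j·(n−1) + ((j − p) mod m)} = (X^m − 1) · ( X^{(p·(n−1)) mod (m·(n−1))} + Σ_{j=1}^{n−1} X^{(p·(j·m − 1)) mod (m·(n−1))} ), where (j − p) mod m denotes the representative in {0, 1, …, m−1} of j − p modulo m. -/

import Mathlib

open Polynomial

/-- The polynomial identity underlying the computation of the fake degree of the Galois
twist of the reflection representation of `G(m,m,n)`:
`(X^n − 1) · Σ_{j=0}^{m−1} X^{j(n−1)+((j−p) mod m)}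
  = (X^m − 1) · (X^{p(n−1) mod m(n−1)} + Σ_{j=1}^{n−1} X^{p(jm−1) mod m(n−1)})` in `ℤ[X]`. -/

lemma aux_mod (m e a r : ℕ) (hr : r < m) : (m * a + r) % (m * e) = m * (a % e) + r := by
  rcases Nat.eq_zero_or_pos e with he | he
  · subst he; simp
  conv_lhs => rw [show m * a + r = m * e * (a / e) + (m * (a % e) + r) by
    rw [← Nat.add_assoc, mul_assoc, ← Nat.mul_add, Nat.div_add_mod]]
  rw [Nat.mul_add_mod, Nat.mod_eq_of_lt]
  have h1 : a % e < e := Nat.mod_lt _ he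
  have h2 : m * (a % e) + m ≤ m * e := by
    calc m * (a % e) + m = m * (a % e + 1) := by ring
    _ ≤ m * e := Nat.mul_le_mul_left _ (by omega)
  omega

lemma key_sum (m e p : ℕ) (hm : 2 ≤ m) (he : 1 ≤ e) (hp : 1 ≤ p)
    (hcopm : p.Coprime m) (hcope : p.Coprime e) :
    ∑ j ∈ Finset.Icc 1 e, (X : Polynomial ℤ) ^ ((p * (j * m - 1)) % (m * e)) =
    ∑ i ∈ Finset.range e, (X : Polynomial ℤ) ^ (m * i + (m - p % m)) := by
  haveI : NeZero e := ⟨by omega⟩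
  set q := p % m with hq
  have hqm : q < m := Nat.mod_lt _ (by omega)
  have hq1 : 1 ≤ q := by
    rcases Nat.eq_zero_or_pos q with h | h
    · exfalso
      have h1 : m ∣ p := Nat.dvd_of_mod_eq_zero h
      have h2 : m ∣ Nat.gcd p m := Nat.dvd_gcd h1 dvd_rfl
      rw [hcopm] at h2
      have := Nat.le_of_dvd one_pos h2
      omega
    · exact h
  set s := p / m + 1 with hs
  have hms : m * s = p + (m - q) := by
    have := Nat.div_add_mod p m
    rw [hs]; rw [Nat.mul_add]; omega
  have hps : ∀ j, 1 ≤ j → s ≤ p * j := by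
    intro j hj
    have h1 : p ≤ p * j := Nat.le_mul_of_pos_right p (by omega)
    have h2 : p / m ≤ p / 2 := Nat.div_le_div_left hm (by omega)
    have h3 : p / 2 + 1 ≤ p ∨ p = 1 := by omega
    rcases h3 with h3 | h3
    · omega
    · simp [hs, h3, Nat.div_eq_of_lt (show 1 < m by omega)] at *; omega
  -- rewrite exponent
  have hexp : ∀ j ∈ Finset.Icc 1 e, (p * (j * m - 1)) % (m * e) = m * ((p * j - s) % e) + (m - q) := by
    intro j hj
    simp only [Finset.mem_Icc] at hj
    have h1 : p * (j * m - 1) = m * (p * j - s) + (m - q) := by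
      have h5 : s ≤ p * j := hps j hj.1
      have hjm : 1 ≤ j * m := Nat.mul_pos (by omega) (by omega)
      have h4 : p * (j * m) = m * (p * j) := by ring
      have h6 : m * s ≤ m * (p * j) := Nat.mul_le_mul_left _ h5
      rw [Nat.mul_sub, Nat.mul_sub, mul_one, h4]
      omega
    rw [h1, aux_mod _ _ _ _ (by omega)]
  rw [Finset.sum_congr rfl (fun j hj => by rw [hexp j hj])]
  -- bijection Icc 1 e → univ (ZMod e)
  set u : (ZMod e)ˣ := ZMod.unitOfCoprime p hcope with hu
  have hun : (u : ZMod e) = (p : ZMod e) := ZMod.coe_unitOfCoprime p hcope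
  have step1 : ∑ j ∈ Finset.Icc 1 e, (X : Polynomial ℤ) ^ (m * ((p * j - s) % e) + (m - q)) =
      ∑ x : ZMod e, (X : Polynomial ℤ) ^ (m * x.val + (m - q)) := by
    apply Finset.sum_nbij' (i := fun j => ((p * j - s : ℕ) : ZMod e))
      (j := fun x => if ((u⁻¹ : (ZMod e)ˣ) * (x + (s : ZMod e)) : ZMod e).val = 0 then e
        else ((u⁻¹ : (ZMod e)ˣ) * (x + (s : ZMod e)) : ZMod e).val)
    · intro a _; exact Finset.mem_univ _
    · intro x _
      simp only [Finset.mem_Icc]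
      have := ZMod.val_lt ((u⁻¹ : (ZMod e)ˣ) * (x + (s : ZMod e)) : ZMod e)
      split <;> omega
    · intro j hj
      simp only [Finset.mem_Icc] at hj
      have hcast : ((p * j - s : ℕ) : ZMod e) + (s : ZMod e) = ((p * j : ℕ) : ZMod e) := by
        rw [← Nat.cast_add, Nat.sub_add_cancel (hps j hj.1)]
      have hval : ((u⁻¹ : (ZMod e)ˣ) * (((p * j - s : ℕ) : ZMod e) + (s : ZMod e)) : ZMod e)
          = (j : ZMod e) := by
        rw [hcast, Nat.cast_mul, ← hun, ← mul_assoc]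
        simp
      rw [hval]
      rw [ZMod.val_natCast]
      rcases Nat.lt_or_ge j e with h | h
      · rw [Nat.mod_eq_of_lt h, if_neg (show ¬ j = 0 by omega)]
      · have hje : j = e := by omega
        subst hje
        rw [Nat.mod_self, if_pos rfl]
    · intro x _
      set y := ((u⁻¹ : (ZMod e)ˣ) * (x + (s : ZMod e)) : ZMod e) with hy
      have hcy : ∀ jn : ℕ, (jn : ZMod e) = y → 1 ≤ jn → ((p * jn - s : ℕ) : ZMod e) = x := by
        intro jn hjn hjn1
        have : ((p * jn - s : ℕ) : ZMod e) = (p : ZMod e) * jn - s := by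
          rw [Nat.cast_sub (hps jn hjn1), Nat.cast_mul]
        rw [this, hjn, hy, ← hun, ← mul_assoc]
        simp
      split
      · next h0 =>
        apply hcy e _ he
        rw [ZMod.natCast_self]
        exact ((ZMod.val_eq_zero y).mp h0).symm
      · next h0 =>
        apply hcy y.val _ (by omega)
        exact ZMod.natCast_rightInverse y
    · intro j hj
      simp only [Finset.mem_Icc] at hj
      congr 2
      rw [ZMod.val_natCast]
  rw [step1]
  -- univ (ZMod e) → range e
  obtain ⟨k, rfl⟩ : ∃ k, e = k + 1 := ⟨e - 1, by omega⟩
  rw [← Fin.sum_univ_eq_sum_range (fun i => (X : Polynomial ℤ) ^ (m * i + (m - q))) (k+1)]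
  rfl


theorem fake_degree_identity (m n p : ℕ) (hm : 2 ≤ m) (hn : 2 ≤ n) (hp : 1 ≤ p)
    (hcop : Nat.Coprime p (m * (n - 1))) :
    (X ^ n - 1) * ∑ j ∈ Finset.range m,
        (X : Polynomial ℤ) ^ (j * (n - 1) + (((j : ℤ) - (p : ℤ)) % (m : ℤ)).toNat) =
      (X ^ m - 1) * ((X : Polynomial ℤ) ^ ((p * (n - 1)) % (m * (n - 1))) +
        ∑ j ∈ Finset.Icc 1 (n - 1),
          (X : Polynomial ℤ) ^ ((p * (j * m - 1)) % (m * (n - 1)))) := by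
  obtain ⟨e, rfl⟩ : ∃ e, n = e + 1 := ⟨n - 1, by omega⟩
  simp only [Nat.add_sub_cancel] at *
  have he1 : 1 ≤ e := by omega
  have hcopm : Nat.Coprime p m := Nat.Coprime.coprime_dvd_right (dvd_mul_right m e) hcop
  have hcope : Nat.Coprime p e := Nat.Coprime.coprime_dvd_right (dvd_mul_left e m) hcop
  set q := p % m with hq
  have hqm : q < m := Nat.mod_lt _ (by omega)
  have hq1 : 1 ≤ q := by
    rcases Nat.eq_zero_or_pos q with h | h
    · exfalso
      have h1 : m ∣ p := Nat.dvd_of_mod_eq_zero h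
      have h2 : m ∣ Nat.gcd p m := Nat.dvd_gcd h1 dvd_rfl
      rw [hcopm] at h2
      have := Nat.le_of_dvd one_pos h2
      omega
    · exact h
  set t := m - q with ht0
  have ht : m = q + t := by omega
  have hdm : m * (p / m) + q = p := Nat.div_add_mod p m
  -- Step 1: int exponents to nat
  have hexp : ∀ j : ℕ, (((j : ℤ) - (p : ℤ)) % (m : ℤ)).toNat = (j + t) % m := by
    intro j
    have c1 : (m : ℤ) * ((p / m : ℕ) : ℤ) + (q : ℤ) = (p : ℤ) := by exact_mod_cast hdm
    have ct : (t : ℤ) = (m : ℤ) - (q : ℤ) := by omega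
    have key : ((j : ℤ) - p) % m = ((j + t : ℕ) : ℤ) % m := by
      conv_lhs => rw [show (j : ℤ) - p = ((j + t : ℕ) : ℤ) + (m : ℤ) * (-(((p / m : ℕ) : ℤ) + 1)) by
        rw [Nat.cast_add]
        linear_combination c1 - ct]
      rw [Int.add_mul_emod_self_left]
    rw [key]
    rw [show ((j + t : ℕ) : ℤ) % (m : ℤ) = (((j + t) % m : ℕ) : ℤ) by push_cast; ring]
    exact Int.toNat_natCast _
  rw [Finset.sum_congr rfl (fun j _ => by rw [hexp j])]
  -- Step 2: RHS first exponent
  rw [Nat.mul_mod_mul_right e p m, ← hq]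
  -- Step 3: RHS sum via key_sum
  rw [key_sum m e p hm he1 hp hcopm hcope, ← hq, ← ht0]
  -- Step 4: split the LHS sum
  have hsplit : ∑ j ∈ Finset.range m, (X : Polynomial ℤ) ^ (j * e + (j + t) % m) =
      (∑ j ∈ Finset.range q, ((X : Polynomial ℤ) ^ (e + 1)) ^ j) * X ^ t +
      (∑ k ∈ Finset.range t, ((X : Polynomial ℤ) ^ (e + 1)) ^ k) * X ^ (q * e) := by
    rw [Finset.range_eq_Ico, ← Finset.sum_Ico_consecutive _ (Nat.zero_le q) (le_of_lt hqm)]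
    congr 1
    · rw [← Finset.range_eq_Ico, Finset.sum_mul]
      apply Finset.sum_congr rfl
      intro j hj
      simp only [Finset.mem_range] at hj
      rw [Nat.mod_eq_of_lt (by omega), ← pow_mul, ← pow_add]
      congr 1
      have h : (e + 1) * j = j * e + j := by ring
      omega
    · rw [Finset.sum_Ico_eq_sum_range]
      rw [show m - q = t from rfl, Finset.sum_mul]
      apply Finset.sum_congr rfl
      intro k hk
      simp only [Finset.mem_range] at hk
      have h1 : (q + k + t) % m = k := by
        rw [show q + k + t = m + k by omega, Nat.add_mod_left, Nat.mod_eq_of_lt (by omega)]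
      rw [h1, ← pow_mul, ← pow_add]
      congr 1
      have h2 : (q + k) * e = q * e + k * e := by ring
      have h3 : (e + 1) * k = k * e + k := by ring
      omega
  rw [hsplit]
  -- Step 5: target sum as geometric
  have htar : ∑ i ∈ Finset.range e, (X : Polynomial ℤ) ^ (m * i + t) =
      (∑ i ∈ Finset.range e, ((X : Polynomial ℤ) ^ m) ^ i) * X ^ t := by
    rw [Finset.sum_mul]
    apply Finset.sum_congr rfl
    intro i _
    rw [← pow_mul, ← pow_add]
  rw [htar]
  -- Step 6: final algebra
  have g1 := geom_sum_mul ((X : Polynomial ℤ) ^ (e + 1)) q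
  have g2 := geom_sum_mul ((X : Polynomial ℤ) ^ (e + 1)) t
  have g3 := geom_sum_mul ((X : Polynomial ℤ) ^ m) e
  have p1 : (((X : Polynomial ℤ) ^ (e + 1)) ^ q) * X ^ t = X ^ (q * e) * X ^ m := by
    rw [← pow_mul, ← pow_add, ← pow_add]
    congr 1
    have h1 : (e + 1) * q = q * e + q := by ring
    omega
  have p2 : (((X : Polynomial ℤ) ^ (e + 1)) ^ t) * X ^ (q * e) = ((X ^ m) ^ e) * X ^ t := by
    rw [← pow_mul, ← pow_mul, ← pow_add, ← pow_add]
    congr 1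
    have h1 : (e + 1) * t = e * t + t := by ring
    have h2 : m * e = q * e + t * e := by rw [ht]; ring
    have h3 : e * t = t * e := by ring
    omega
  linear_combination (X : Polynomial ℤ) ^ t * g1 + X ^ (q * e) * g2 - X ^ t * g3 + p1 + p2
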